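/- Minimality of the disjoint-paths matching: with T a trivalent tree with leaves [n] and metric d given by path length, the unique perfect matching μ of an even subset B whose connecting paths are pairwise edge-disjoint is the (unique) matching minimizing the total length Σ_{(i,j)∈μ} d(i,j) among all perfect matchings of B. -/

import Mathlib

open Finset

/-- `μ` is a perfect matching of the even subset `B ⊆ [n]`. -/
def IsMatchingOf {n : ℕ} (B : Finset (Fin n)) (μ : Finset (Fin n × Fin n)) : Prop :=
  (∀ q ∈ μ, q.1 < q.2 ∧ q.1 ∈ B ∧ q.2 ∈ B) ∧
    ∀ b ∈ B, ∃! q, q ∈ μ ∧ (b = q.1 ∨ b = q.2)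

/-- The paths in `G` joining the leaves labelled by the pairs of `μ` are pairwise
edge-disjoint. -/
def PathsEdgeDisjoint {V : Type*} {n : ℕ} (G : SimpleGraph V) (leaf : Fin n → V)
    (μ : Finset (Fin n × Fin n)) : Prop :=
  ∀ q ∈ μ, ∀ q' ∈ μ, q ≠ q' →
    ∀ (P : G.Path (leaf q.1) (leaf q.2)) (P' : G.Path (leaf q'.1) (leaf q'.2)),
      ∀ e, e ∈ P.1.edges → e ∉ P'.1.edges

section Stmt19Aux

open Finset SimpleGraph Walk

variable {V : Type*}

lemma aux_mem_support_of_mem_edges {G : SimpleGraph V} {a b x : V} {e : Sym2 V}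
    (w : G.Walk a b) (hx : x ∈ e) (he : e ∈ w.edges) : x ∈ w.support := by
  induction e with
  | _ u v =>
    rcases Sym2.mem_iff.mp hx with rfl | rfl
    · exact w.fst_mem_support_of_mem_edges he
    · exact w.snd_mem_support_of_mem_edges he

lemma aux_reach_aux {G : SimpleGraph V} (u v : V) {x y : V} (w : G.Walk x y) :
    (G.deleteEdges {s(u,v)}).Reachable x y ∨ (G.deleteEdges {s(u,v)}).Reachable x u ∨
      (G.deleteEdges {s(u,v)}).Reachable x v := by
  induction w with
  | nil => exact Or.inl (Reachable.refl _)
  | @cons a c _ h p ih =>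
    by_cases he : s(a, c) = s(u, v)
    · rw [Sym2.eq_iff] at he
      rcases he with ⟨rfl, rfl⟩ | ⟨rfl, rfl⟩
      · exact Or.inr (Or.inl (Reachable.refl _))
      · exact Or.inr (Or.inr (Reachable.refl _))
    · have hadj : (G.deleteEdges {s(u,v)}).Adj a c := by
        rw [SimpleGraph.deleteEdges_adj]
        exact ⟨h, by simpa using he⟩
      rcases ih with h1 | h1 | h1
      · exact Or.inl (hadj.reachable.trans h1)
      · exact Or.inr (Or.inl (hadj.reachable.trans h1))
      · exact Or.inr (Or.inr (hadj.reachable.trans h1))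

lemma aux_reach_or {G : SimpleGraph V} (hpre : G.Preconnected) (u v x : V) :
    (G.deleteEdges {s(u,v)}).Reachable x u ∨ (G.deleteEdges {s(u,v)}).Reachable x v := by
  obtain ⟨w⟩ := hpre x u
  rcases aux_reach_aux u v w with h | h | h
  · exact Or.inl h
  · exact Or.inl h
  · exact Or.inr h
lemma aux_cross_iff [DecidableEq V] {G : SimpleGraph V} (hT : G.IsTree) {u v i j : V}
    (w : G.Walk i j) (hw : w.IsPath) :
    s(u,v) ∈ w.edges ↔
      ¬ ((G.deleteEdges {s(u,v)}).Reachable i u ↔ (G.deleteEdges {s(u,v)}).Reachable j u) := by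
  set G' := G.deleteEdges {s(u,v)} with hG'
  constructor
  · intro he hiff
    have key : ∀ x : V, G'.Reachable i x → G'.Reachable j x → False := by
      intro x hix hjx
      obtain ⟨w'⟩ := hix.trans hjx.symm
      have hsub : ∀ e ∈ w'.edges, e ∈ G.edgeSet := fun e hme =>
        (SimpleGraph.edgeSet_deleteEdges _ ▸ w'.edges_subset_edgeSet hme).1
      have hne : s(u,v) ∉ w'.edges := by
        intro hmem
        have := w'.edges_subset_edgeSet hmem
        rw [hG', SimpleGraph.edgeSet_deleteEdges] at this
        exact this.2 rfl
      set w2 : G.Walk i j := w'.transfer G hsub with hw2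
      have hedges : w2.edges = w'.edges := w'.edges_transfer hsub
      have huniq := hT.IsAcyclic.path_unique ⟨w, hw⟩ w2.toPath
      have : s(u,v) ∈ (w2.toPath : G.Walk i j).edges := by
        rw [← Subtype.ext_iff.mp huniq]; exact he
      exact hne (hedges ▸ w2.edges_toPath_subset this)
    by_cases hiu : G'.Reachable i u
    · exact key u hiu (hiff.mp hiu)
    · have hju : ¬ G'.Reachable j u := fun h => hiu (hiff.mpr h)
      have hiv := (aux_reach_or hT.isConnected.preconnected u v i).resolve_left hiu
      have hjv := (aux_reach_or hT.isConnected.preconnected u v j).resolve_left hju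
      exact key v hiv hjv
  · intro hne
    by_contra he
    have hp : ∀ e ∈ w.edges, e ∉ ({s(u,v)} : Set (Sym2 V)) := by
      intro e hme hmem
      rw [Set.mem_singleton_iff] at hmem
      exact he (hmem ▸ hme)
    have r : G'.Reachable i j := ⟨w.toDeleteEdges {s(u,v)} hp⟩
    exact hne ⟨fun h => r.symm.trans h, fun h => r.trans h⟩
lemma aux_first_edge {G : SimpleGraph V} [Fintype V] [DecidableEq V] [DecidableRel G.Adj]
    {b c : V} (h : G.Adj b c) (hdeg : G.degree b = 1) {e : Sym2 V}
    (he : e ∈ G.edgeSet) (hbe : b ∈ e) : e = s(b, c) := by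
  have h1 : e ∈ G.incidenceFinset b := by
    rw [SimpleGraph.mem_incidenceFinset]; exact ⟨he, hbe⟩
  have h2 : s(b,c) ∈ G.incidenceFinset b := by
    rw [SimpleGraph.mem_incidenceFinset]
    exact ⟨h, Sym2.mem_mk_left _ _⟩
  have hcard : (G.incidenceFinset b).card ≤ 1 := by
    rw [SimpleGraph.card_incidenceFinset_eq_degree, hdeg]
  exact Finset.card_le_one.mp hcard _ h1 _ h2

lemma aux_div {G : SimpleGraph V} [Fintype V] [DecidableEq V] [DecidableRel G.Adj] :
    ∀ {b j : V} (Q : G.Walk b j) {k : V} (P : G.Walk b k), Q.IsPath → P.IsPath → j ≠ k →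
    G.degree j = 1 → G.degree k = 1 → ∀ e0 : Sym2 V, e0 ∈ G.edgeSet → b ∈ e0 →
    e0 ∉ Q.edges → e0 ∉ P.edges →
    ∃ (x : V) (e1 e2 e3 : Sym2 V), x ∈ e1 ∧ x ∈ e2 ∧ x ∈ e3 ∧ e1 ≠ e2 ∧ e1 ≠ e3 ∧ e2 ≠ e3 ∧
      e1 ∈ Q.edges ∧ e1 ∉ P.edges ∧ e2 ∈ P.edges ∧
      e3 ∈ (e0 :: P.edges) ∧ e3 ∈ (e0 :: Q.edges) := by
  intro b j Q
  induction Q with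
  | @nil b =>
    -- here j = b; P : walk b k with b ≠ k, degree b = 1
    intro k P _ hP hjk hdj hdk e0 he0 hbe0 _ h0P
    cases P with
    | nil => exact absurd rfl hjk
    | @cons _ c _ h p =>
      exfalso
      have : e0 = s(b, c) := aux_first_edge h hdj he0 hbe0
      exact h0P (this ▸ List.mem_cons_self)
  | @cons b c _ hbc Q' ih =>
    intro k P hQ hP hjk hdj hdk e0 he0 hbe0 h0Q h0P
    cases P with
    | nil =>
      exfalso
      have : e0 = s(b, c) := aux_first_edge hbc hdk he0 hbe0
      exact h0Q (this ▸ List.mem_cons_self)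
    | @cons _ d _ hbd P' =>
      by_cases hsame : s(b, c) = s(b, d)
      · -- same first edge: c = d
        have hcd : c = d := by
          rw [Sym2.eq_iff] at hsame
          rcases hsame with ⟨-, h2⟩ | ⟨h1, h2⟩
          · exact h2
          · exact absurd (h1 ▸ hbd) (G.irrefl)
        subst hcd
        have hQ' := hQ.of_cons
        have hP' := hP.of_cons
        have hnodupQ := hQ.isTrail.edges_nodup
        have hnodupP := hP.isTrail.edges_nodup
        rw [Walk.edges_cons, List.nodup_cons] at hnodupQ hnodupP
        obtain ⟨x, e1, e2, e3, hx1, hx2, hx3, h12, h13, h23, h1Q, h1P, h2P, h3P, h3Q⟩ :=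
          ih P' hQ' hP' hjk hdj hdk (s(b,c)) hbc (Sym2.mem_mk_right _ _)
            hnodupQ.1 hnodupP.1
        refine ⟨x, e1, e2, e3, hx1, hx2, hx3, h12, h13, h23, List.mem_cons_of_mem _ h1Q,
          ?_, List.mem_cons_of_mem _ h2P, ?_, ?_⟩
        · -- e1 ∉ (cons).edges
          rw [Walk.edges_cons, List.mem_cons]
          rintro (rfl | hmem)
          · exact hnodupQ.1 h1Q
          · exact h1P hmem
        · rw [List.mem_cons] at h3P ⊢
          rcases h3P with rfl | h
          · exact Or.inr (by rw [Walk.edges_cons]; exact List.mem_cons_self)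
          · exact Or.inr (by rw [Walk.edges_cons]; exact List.mem_cons_of_mem _ h)
        · rw [List.mem_cons] at h3Q ⊢
          rcases h3Q with rfl | h
          · exact Or.inr (by rw [Walk.edges_cons]; exact List.mem_cons_self)
          · exact Or.inr (by rw [Walk.edges_cons]; exact List.mem_cons_of_mem _ h)
      · -- divergence at b
        refine ⟨b, s(b,c), s(b,d), e0, Sym2.mem_mk_left _ _, Sym2.mem_mk_left _ _, hbe0,
          hsame, ?_, ?_, List.mem_cons_self, ?_, List.mem_cons_self,
          List.mem_cons_self, List.mem_cons_self⟩
        · rintro rfl; exact h0Q (List.mem_cons_self)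
        · rintro rfl; exact h0P (List.mem_cons_self)
        · -- s(b,c) ∉ (cons hbd P').edges
          rw [Walk.edges_cons, List.mem_cons]
          rintro (h | hmem)
          · exact hsame h
          · have : b ∈ P'.support :=
              aux_mem_support_of_mem_edges P' (Sym2.mem_mk_left _ _) hmem
            exact ((Walk.cons_isPath_iff _ _).mp hP).2 this
lemma aux_two_edges {G : SimpleGraph V} :
    ∀ {a c : V} (w : G.Walk a c), w.IsPath → ∀ {x : V}, x ∈ w.support → x ≠ a → x ≠ c →
    ∃ f1 f2 : Sym2 V, f1 ∈ w.edges ∧ f2 ∈ w.edges ∧ f1 ≠ f2 ∧ x ∈ f1 ∧ x ∈ f2 := by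
  intro a c w
  induction w with
  | nil =>
    intro _ x hx hxa _
    rw [Walk.support_nil, List.mem_singleton] at hx
    exact absurd hx hxa
  | @cons a b _ hab w' ih =>
    intro hp x hx hxa hxc
    rw [Walk.support_cons, List.mem_cons] at hx
    rcases hx with rfl | hx
    · exact absurd rfl hxa
    by_cases hxb : x = b
    · subst hxb
      -- w' nontrivial since x ≠ c
      cases w' with
      | nil => exact absurd rfl hxc
      | @cons _ b2 _ hb2 w'' =>
        refine ⟨s(a, x), s(x, b2), List.mem_cons_self,
          List.mem_cons_of_mem _ (List.mem_cons_self), ?_, Sym2.mem_mk_right _ _,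
          Sym2.mem_mk_left _ _⟩
        intro hEq
        have hnodup := hp.isTrail.edges_nodup
        rw [Walk.edges_cons, List.nodup_cons] at hnodup
        exact hnodup.1 (hEq ▸ List.mem_cons_self)
    · obtain ⟨f1, f2, h1, h2, h12, hx1, hx2⟩ := ih hp.of_cons hx hxb hxc
      exact ⟨f1, f2, List.mem_cons_of_mem _ h1, List.mem_cons_of_mem _ h2, h12, hx1, hx2⟩

lemma aux_div0 {G : SimpleGraph V} [Fintype V] [DecidableEq V] [DecidableRel G.Adj]
    {b j k : V} (Q : G.Walk b j) (P : G.Walk b k) (hQ : Q.IsPath) (hP : P.IsPath)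
    (hjk : j ≠ k) (hbj : b ≠ j) (hbk : b ≠ k) (hdb : G.degree b = 1)
    (hdj : G.degree j = 1) (hdk : G.degree k = 1) :
    ∃ (x : V) (e1 e2 e3 : Sym2 V), x ∈ e1 ∧ x ∈ e2 ∧ x ∈ e3 ∧ e1 ≠ e2 ∧ e1 ≠ e3 ∧ e2 ≠ e3 ∧
      e1 ∈ Q.edges ∧ e1 ∉ P.edges ∧ e2 ∈ P.edges ∧ e3 ∈ P.edges ∧ e3 ∈ Q.edges := by
  cases Q with
  | nil => exact absurd rfl hbj
  | @cons _ c _ hbc Q' =>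
    cases P with
    | nil => exact absurd rfl hbk
    | @cons _ d _ hbd P' =>
      have hsame : s(b, d) = s(b, c) := aux_first_edge hbc hdb hbd (Sym2.mem_mk_left _ _)
      have hcd : d = c := by
        rw [Sym2.eq_iff] at hsame
        rcases hsame with ⟨-, h2⟩ | ⟨h1, h2⟩
        · exact h2
        · exact absurd (h1 ▸ hbc) (G.irrefl)
      subst hcd
      have hnodupQ := hQ.isTrail.edges_nodup
      have hnodupP := hP.isTrail.edges_nodup
      rw [Walk.edges_cons, List.nodup_cons] at hnodupQ hnodupP
      obtain ⟨x, e1, e2, e3, hx1, hx2, hx3, h12, h13, h23, h1Q, h1P, h2P, h3P, h3Q⟩ :=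
        aux_div Q' P' hQ.of_cons hP.of_cons hjk hdj hdk (s(b,d)) hbc (Sym2.mem_mk_right _ _)
          hnodupQ.1 hnodupP.1
      refine ⟨x, e1, e2, e3, hx1, hx2, hx3, h12, h13, h23,
        List.mem_cons_of_mem _ h1Q, ?_, List.mem_cons_of_mem _ h2P, ?_, ?_⟩
      · rw [Walk.edges_cons, List.mem_cons]
        rintro (rfl | hmem)
        · exact hnodupQ.1 h1Q
        · exact h1P hmem
      · rw [List.mem_cons] at h3P
        rw [Walk.edges_cons, List.mem_cons]
        rcases h3P with rfl | h
        · exact Or.inl rfl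
        · exact Or.inr h
      · rw [List.mem_cons] at h3Q
        rw [Walk.edges_cons, List.mem_cons]
        rcases h3Q with rfl | h
        · exact Or.inl rfl
        · exact Or.inr h

end Stmt19Aux

open SimpleGraph Walk in
/-- in a finite trivalent tree with positively weighted edges and leaves
labelled by `[n]`, the matching `μ` of an even leaf subset `B` whose connecting paths are
pairwise edge-disjoint is the unique minimizer of the total path-length
`Σ_{(i,j) ∈ μ} d(i,j)` among all perfect matchings of `B`: any other matching `ν` has
strictly larger total length.  Here `D i j` denotes the length (sum of the edge weights `ℓ`)
of the (unique) path in the tree between the leaves `i` and `j`. -/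
theorem stmt19 {V : Type*} [Fintype V] [DecidableEq V] (G : SimpleGraph V)
    [DecidableRel G.Adj] (hT : G.IsTree)
    (hdeg : ∀ v : V, G.degree v = 1 ∨ G.degree v = 3)
    (n : ℕ) (leaf : Fin n → V) (hleaf1 : ∀ i, G.degree (leaf i) = 1)
    (hinj : Function.Injective leaf)
    (hsurj : ∀ v : V, G.degree v = 1 → ∃ i, leaf i = v)
    (ℓ : Sym2 V → ℝ) (hℓ : ∀ e ∈ G.edgeSet, 0 < ℓ e)
    (D : Fin n → Fin n → ℝ)
    (hD : ∀ (i j : Fin n) (P : G.Path (leaf i) (leaf j)), D i j = (P.1.edges.map ℓ).sum)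
    (B : Finset (Fin n)) (hB : Even B.card)
    (μ : Finset (Fin n × Fin n)) (hμ : IsMatchingOf B μ)
    (hdisj : PathsEdgeDisjoint G leaf μ) :
    ∀ ν : Finset (Fin n × Fin n), IsMatchingOf B ν → ν ≠ μ →
      (∑ q ∈ μ, D q.1 q.2) < ∑ q ∈ ν, D q.1 q.2 := by
  classical
  intro ν hν hne
  choose pw hpw hup using hT.existsUnique_path
  -- `D` as a sum over all edges
  have hDsum : ∀ q : Fin n × Fin n, D q.1 q.2 =
      ∑ e ∈ G.edgeFinset, if e ∈ (pw (leaf q.1) (leaf q.2)).edges then ℓ e else 0 := by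
    intro q
    rw [hD q.1 q.2 ⟨pw _ _, hpw _ _⟩]
    rw [← List.sum_toFinset ℓ (hpw (leaf q.1) (leaf q.2)).isTrail.edges_nodup]
    rw [Finset.sum_ite, Finset.sum_const_zero, add_zero]
    apply Finset.sum_congr _ (fun _ _ => rfl)
    ext e
    simp only [Finset.mem_filter, List.mem_toFinset, SimpleGraph.mem_edgeFinset]
    exact ⟨fun h => ⟨(pw _ _).edges_subset_edgeSet h, h⟩, fun h => h.2⟩
  -- total length as a weighted count
  have hkey : ∀ m : Finset (Fin n × Fin n), (∑ q ∈ m, D q.1 q.2) =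
      ∑ e ∈ G.edgeFinset,
        ((m.filter fun q => e ∈ (pw (leaf q.1) (leaf q.2)).edges).card : ℝ) * ℓ e := by
    intro m
    simp_rw [hDsum]
    rw [Finset.sum_comm]
    refine Finset.sum_congr rfl fun e _ => ?_
    rw [Finset.sum_ite, Finset.sum_const_zero, add_zero, Finset.sum_const, nsmul_eq_mul]
  -- partition of B by a matching
  have hBU : ∀ m : Finset (Fin n × Fin n), IsMatchingOf B m →
      B = m.biUnion (fun q => ({q.1, q.2} : Finset (Fin n))) := by
    intro m hm
    ext b
    simp only [Finset.mem_biUnion, Finset.mem_insert, Finset.mem_singleton]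
    constructor
    · intro hb
      obtain ⟨q, ⟨hqm, hb'⟩, -⟩ := hm.2 b hb
      exact ⟨q, hqm, hb'⟩
    · rintro ⟨q, hqm, rfl | rfl⟩
      · exact (hm.1 q hqm).2.1
      · exact (hm.1 q hqm).2.2
  have hdisjpairs : ∀ m : Finset (Fin n × Fin n), IsMatchingOf B m →
      ∀ q ∈ m, ∀ q' ∈ m, q ≠ q' →
        Disjoint ({q.1, q.2} : Finset (Fin n)) ({q'.1, q'.2} : Finset (Fin n)) := by
    intro m hm q hq q' hq' hne'
    rw [Finset.disjoint_left]
    intro b hb hb'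
    simp only [Finset.mem_insert, Finset.mem_singleton] at hb hb'
    have hbB : b ∈ B := by
      rcases hb with rfl | rfl
      · exact (hm.1 q hq).2.1
      · exact (hm.1 q hq).2.2
    obtain ⟨q0, -, huniq⟩ := hm.2 b hbB
    exact hne' ((huniq q ⟨hq, hb⟩).trans (huniq q' ⟨hq', hb'⟩).symm)
  -- equal cardinalities
  have hcards : ∀ m : Finset (Fin n × Fin n), IsMatchingOf B m → B.card = 2 * m.card := by
    intro m hm
    rw [hBU m hm, Finset.card_biUnion (hdisjpairs m hm)]
    have h2 : ∀ q ∈ m, ({q.1, q.2} : Finset (Fin n)).card = 2 := fun q hq => by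
      rw [Finset.card_insert_of_notMem (by simp [(hm.1 q hq).1.ne]), Finset.card_singleton]
    rw [Finset.sum_congr rfl h2, Finset.sum_const, smul_eq_mul, Nat.mul_comm]
  -- parity
  have hpar : ∀ e ∈ G.edgeFinset,
      (μ.filter fun q => e ∈ (pw (leaf q.1) (leaf q.2)).edges).card % 2 =
      (ν.filter fun q => e ∈ (pw (leaf q.1) (leaf q.2)).edges).card % 2 := by
    intro e he
    induction e using Sym2.ind with
    | _ u v =>
    have huv : G.Adj u v := SimpleGraph.mem_edgeFinset.mp he
    set f : Fin n → Prop := fun b => (G.deleteEdges {s(u,v)}).Reachable (leaf b) u with hf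
    have hcr : ∀ q : Fin n × Fin n,
        (s(u,v) ∈ (pw (leaf q.1) (leaf q.2)).edges) ↔ ¬ (f q.1 ↔ f q.2) :=
      fun q => aux_cross_iff hT (pw _ _) (hpw _ _)
    suffices h : ∀ m : Finset (Fin n × Fin n), IsMatchingOf B m →
        (m.filter fun q => s(u,v) ∈ (pw (leaf q.1) (leaf q.2)).edges).card % 2
          = (B.filter f).card % 2 by
      rw [h μ hμ, h ν hν]
    intro m hm
    have hcard : (B.filter f).card
        = ∑ q ∈ m, (({q.1, q.2} : Finset (Fin n)).filter f).card := by
      rw [hBU m hm, Finset.filter_biUnion,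
        Finset.card_biUnion (fun q hq q' hq' hne' =>
          Finset.disjoint_filter_filter (hdisjpairs m hm q hq q' hq' hne'))]
    have hfilter : (m.filter fun q => s(u,v) ∈ (pw (leaf q.1) (leaf q.2)).edges).card
        = ∑ q ∈ m, if s(u,v) ∈ (pw (leaf q.1) (leaf q.2)).edges then 1 else 0 := by
      rw [Finset.sum_ite, Finset.sum_const_zero, add_zero, Finset.sum_const, smul_eq_mul,
        Nat.mul_one]
    rw [hfilter, hcard, Finset.sum_nat_mod,
      Finset.sum_nat_mod m 2 (fun q => (({q.1, q.2} : Finset (Fin n)).filter f).card)]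
    congr 1
    apply Finset.sum_congr rfl
    intro q hq
    have hne12 : q.1 ≠ q.2 := (hm.1 q hq).1.ne
    rw [if_congr (hcr q) rfl rfl]
    by_cases h1 : f q.1 <;> by_cases h2 : f q.2 <;>
      simp [Finset.filter_insert, Finset.filter_singleton, h1, h2,
        Finset.card_insert_of_notMem, hne12]
  have hle1 : ∀ e ∈ G.edgeFinset,
      (μ.filter fun q => e ∈ (pw (leaf q.1) (leaf q.2)).edges).card ≤ 1 := by
    intro e he
    rw [Finset.card_le_one]
    intro q hq q' hq'
    rw [Finset.mem_filter] at hq hq'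
    by_contra hne'
    exact hdisj q hq.1 q' hq'.1 hne' ⟨pw _ _, hpw _ _⟩ ⟨pw _ _, hpw _ _⟩ e hq.2 hq'.2
  have hmono : ∀ e ∈ G.edgeFinset,
      (μ.filter fun q => e ∈ (pw (leaf q.1) (leaf q.2)).edges).card ≤
      (ν.filter fun q => e ∈ (pw (leaf q.1) (leaf q.2)).edges).card := by
    intro e he
    rcases Nat.le_one_iff_eq_zero_or_eq_one.mp (hle1 e he) with h0 | h1
    · rw [h0]; exact Nat.zero_le _
    · rw [h1]
      by_contra hc
      push_neg at hc
      interval_cases hval : (ν.filter fun q => e ∈ (pw (leaf q.1) (leaf q.2)).edges).card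
      have := hpar e he
      rw [h1, hval] at this
      simp at this
  have hexists : ∃ e ∈ G.edgeFinset,
      (μ.filter fun q => e ∈ (pw (leaf q.1) (leaf q.2)).edges).card <
      (ν.filter fun q => e ∈ (pw (leaf q.1) (leaf q.2)).edges).card := by
    by_contra hcon
    push_neg at hcon
    have heq : ∀ e ∈ G.edgeFinset,
        (ν.filter fun q => e ∈ (pw (leaf q.1) (leaf q.2)).edges).card =
        (μ.filter fun q => e ∈ (pw (leaf q.1) (leaf q.2)).edges).card :=
      fun e he => le_antisymm (hcon e he) (hmono e he)
    have hcardeq : ν.card = μ.card := by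
      have h1 := hcards μ hμ
      have h2 := hcards ν hν
      omega
    have hnsub : ¬ ν ⊆ μ := by
      intro hsub
      exact hne (Finset.eq_of_subset_of_card_le hsub (le_of_eq hcardeq.symm))
    obtain ⟨q, hqν, hqμ⟩ := Finset.not_subset.mp hnsub
    have hq12 : q.1 < q.2 := (hν.1 q hqν).1
    obtain ⟨q1, ⟨hq1μ, hi1⟩, -⟩ := hμ.2 q.1 (hν.1 q hqν).2.1
    have hq112 : q1.1 < q1.2 := (hμ.1 q1 hq1μ).1
    have final : ∀ (k : Fin n) (P1w : G.Walk (leaf q.1) (leaf k)), P1w.IsPath →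
        (∀ e : Sym2 V, e ∈ P1w.edges ↔ e ∈ (pw (leaf q1.1) (leaf q1.2)).edges) →
        q.2 ≠ k → q.1 ≠ k → False := by
      intro k P1w hP1 hedges hjk h1k
      obtain ⟨x, e1, e2, e3, hx1, hx2, hx3, h12, h13, h23, h1Q, h1P, h2P, h3P, h3Q⟩ :=
        aux_div0 (pw (leaf q.1) (leaf q.2)) P1w (hpw _ _) hP1
          (hinj.ne hjk) (hinj.ne hq12.ne) (hinj.ne h1k)
          (hleaf1 q.1) (hleaf1 q.2) (hleaf1 k)
      have he1 : e1 ∈ G.edgeFinset :=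
        SimpleGraph.mem_edgeFinset.mpr ((pw (leaf q.1) (leaf q.2)).edges_subset_edgeSet h1Q)
      have hν1 : 0 < (ν.filter fun r => e1 ∈ (pw (leaf r.1) (leaf r.2)).edges).card :=
        Finset.card_pos.mpr ⟨q, Finset.mem_filter.mpr ⟨hqν, h1Q⟩⟩
      have hμ1 : 0 < (μ.filter fun r => e1 ∈ (pw (leaf r.1) (leaf r.2)).edges).card := by
        rw [← heq e1 he1]
        exact hν1
      obtain ⟨R, hR⟩ := Finset.card_pos.mp hμ1
      rw [Finset.mem_filter] at hR
      obtain ⟨hRμ, hRe1⟩ := hR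
      have hRq1 : R ≠ q1 := by
        rintro rfl
        exact h1P ((hedges e1).mpr hRe1)
      have hdisjR := hdisj R hRμ q1 hq1μ hRq1 ⟨pw _ _, hpw _ _⟩ ⟨pw _ _, hpw _ _⟩
      have hset : ({e1, e2, e3} : Finset (Sym2 V)) ⊆ G.incidenceFinset x := by
        intro g hmem
        rw [Finset.mem_insert, Finset.mem_insert, Finset.mem_singleton] at hmem
        rw [SimpleGraph.mem_incidenceFinset]
        rcases hmem with rfl | rfl | rfl
        · exact ⟨(pw (leaf q.1) (leaf q.2)).edges_subset_edgeSet h1Q, hx1⟩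
        · exact ⟨(pw (leaf q1.1) (leaf q1.2)).edges_subset_edgeSet ((hedges _).mp h2P), hx2⟩
        · exact ⟨(pw (leaf q1.1) (leaf q1.2)).edges_subset_edgeSet ((hedges _).mp h3P), hx3⟩
      have hcard3 : ({e1, e2, e3} : Finset (Sym2 V)).card = 3 := by
        rw [Finset.card_insert_of_notMem (by simp [h12, h13]),
          Finset.card_insert_of_notMem (by simp [h23]), Finset.card_singleton]
      have hdegx : G.degree x = 3 := by
        rcases hdeg x with h | h
        · exfalso
          have hcc := Finset.card_le_card hset
          rw [hcard3, SimpleGraph.card_incidenceFinset_eq_degree, h] at hcc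
          omega
        · exact h
      have hIeq : G.incidenceFinset x = {e1, e2, e3} :=
        (Finset.eq_of_subset_of_card_le hset (by
          rw [hcard3, SimpleGraph.card_incidenceFinset_eq_degree, hdegx])).symm
      have hxA : x ≠ leaf R.1 := by
        intro hxe
        have h := hleaf1 R.1
        rw [← hxe, hdegx] at h
        norm_num at h
      have hxB : x ≠ leaf R.2 := by
        intro hxe
        have h := hleaf1 R.2
        rw [← hxe, hdegx] at h
        norm_num at h
      have hxsup : x ∈ (pw (leaf R.1) (leaf R.2)).support :=
        aux_mem_support_of_mem_edges _ hx1 hRe1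
      obtain ⟨f1, f2, hf1, hf2, hf12, hxf1, hxf2⟩ :=
        aux_two_edges (pw (leaf R.1) (leaf R.2)) (hpw _ _) hxsup hxA hxB
      have hmemI : ∀ g : Sym2 V, g ∈ (pw (leaf R.1) (leaf R.2)).edges → x ∈ g → g = e1 := by
        intro g hg hxg
        have hgI : g ∈ ({e1, e2, e3} : Finset (Sym2 V)) := by
          rw [← hIeq, SimpleGraph.mem_incidenceFinset]
          exact ⟨(pw _ _).edges_subset_edgeSet hg, hxg⟩
        rw [Finset.mem_insert, Finset.mem_insert, Finset.mem_singleton] at hgI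
        rcases hgI with rfl | rfl | rfl
        · rfl
        · exact absurd ((hedges _).mp h2P) (hdisjR g hg)
        · exact absurd ((hedges _).mp h3P) (hdisjR g hg)
      exact hf12 ((hmemI f1 hf1 hxf1).trans (hmemI f2 hf2 hxf2).symm)
    rcases hi1 with h1 | h1
    · refine final q1.2 (pw (leaf q.1) (leaf q1.2)) (hpw _ _) (fun e => by rw [h1]) ?_ ?_
      · rintro h2
        exact hqμ (by rw [show q = q1 from Prod.ext h1 h2]; exact hq1μ)
      · intro hk
        exact hq112.ne (h1.symm.trans hk)
    · refine final q1.1 ((pw (leaf q1.1) (leaf q.1)).reverse) ((hpw _ _).reverse)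
        (fun e => by rw [SimpleGraph.Walk.edges_reverse, List.mem_reverse, h1]) ?_ ?_
      · intro hk
        have hlt : q.2 < q.1 := by
          rw [hk, h1]
          exact hq112
        exact absurd hlt (lt_asymm hq12)
      · intro hk
        exact hq112.ne (hk.symm.trans h1)
  rw [hkey μ, hkey ν]
  obtain ⟨e0, he0, hlt⟩ := hexists
  refine Finset.sum_lt_sum (fun e he => ?_) ⟨e0, he0, ?_⟩
  · exact mul_le_mul_of_nonneg_right (Nat.cast_le.mpr (hmono e he))
      (hℓ e (SimpleGraph.mem_edgeFinset.mp he)).le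
  · exact mul_lt_mul_of_pos_right (Nat.cast_lt.mpr hlt)
      (hℓ e0 (SimpleGraph.mem_edgeFinset.mp he0))
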